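/- arXiv:1702.00857 — 4 statements merged into one kernel-verified Lean document; each statement's English description precedes it below -/
import Mathlib

section
/- Under Assumption A1 at y0 and for any discount factor α ∈ (0,1), the infimum in the discounted optimal control problem V_α(y0) := inf over admissible processes (y(·),u(·)) from y0 of Σ_{t=0}^∞ α^t g(y(t),u(t)) is attained: there exists an admissible process (ȳ(·),ū(·)) from y0 with Σ_{t=0}^∞ α^t g(ȳ(t),ū(t)) = V_α(y0). -/
open MeasureTheory Filter Topology Set ENNReal

noncomputable section

namespace LPOC

/-- The state space `ℝ^m`. -/
abbrev E (m : ℕ) := EuclideanSpace ℝ (Fin m)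

variable {m : ℕ} {U0 : Type*} [MetricSpace U0]

/-- Upper semicontinuity of a compact-valued set-valued map at points of `Y`. -/
def UscOn (Y : Set (E m)) (A : E m → Set U0) : Prop :=
  ∀ y ∈ Y, ∀ V : Set U0, IsOpen V → A y ⊆ V →
    ∃ O : Set (E m), IsOpen O ∧ y ∈ O ∧ ∀ y' ∈ O ∩ Y, A y' ⊆ V

/-- `A(y) := {u ∈ U(y) : f(y,u) ∈ Y}`. -/
def Amap (Y : Set (E m)) (U : E m → Set U0) (f : E m × U0 → E m) (y : E m) : Set U0 :=
  {u ∈ U y | f (y, u) ∈ Y}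

/-- `G := {(y,u) : y ∈ Y, u ∈ U(y), f(y,u) ∈ Y}`, the graph of `A`. -/
def graphG (Y : Set (E m)) (U : E m → Set U0) (f : E m × U0 → E m) : Set (E m × U0) :=
  {p | p.1 ∈ Y ∧ p.2 ∈ U p.1 ∧ f p ∈ Y}

/-- An admissible process `(y(·),u(·))` from `y0` on the infinite horizon. -/
def AdmProc (Y : Set (E m)) (U : E m → Set U0) (f : E m × U0 → E m)
    (y0 : E m) (y : ℕ → E m) (u : ℕ → U0) : Prop :=
  y 0 = y0 ∧ ∀ t : ℕ, y (t + 1) = f (y t, u t) ∧ y t ∈ Y ∧ u t ∈ U (y t)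

/-- An admissible process from `y0` on the finite horizon `{0, ..., S-1}`. -/
def AdmProcH (Y : Set (E m)) (U : E m → Set U0) (f : E m × U0 → E m)
    (S : ℕ) (y0 : E m) (y : ℕ → E m) (u : ℕ → U0) : Prop :=
  y 0 = y0 ∧ (∀ t < S, y (t + 1) = f (y t, u t) ∧ y t ∈ Y ∧ u t ∈ U (y t)) ∧ y S ∈ Y

/-- The discounted cost `Σ_{t=0}^∞ α^t g(y(t),u(t))`. -/
def discountedCost (g : E m × U0 → ℝ) (α : ℝ) (y : ℕ → E m) (u : ℕ → U0) : ℝ :=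
  ∑' t : ℕ, α ^ t * g (y t, u t)

/-- The discounted value function `V_α` (real-valued version). -/
def Valpha (Y : Set (E m)) (U : E m → Set U0) (f : E m × U0 → E m) (g : E m × U0 → ℝ)
    (α : ℝ) (y0 : E m) : ℝ :=
  sInf {r : ℝ | ∃ y u, AdmProc Y U f y0 y u ∧ r = discountedCost g α y u}

/-- The discounted value function `V_α` with values in `ℝ ∪ {±∞}` (equal to `+∞` when no
admissible process exists). -/
def ValphaE (Y : Set (E m)) (U : E m → Set U0) (f : E m × U0 → E m) (g : E m × U0 → ℝ)
    (α : ℝ) (y0 : E m) : EReal :=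
  sInf {r : EReal | ∃ y u, AdmProc Y U f y0 y u ∧ r = ((discountedCost g α y u : ℝ) : EReal)}

/-- The finite-horizon value function `V(S, y0)`. -/
def Vfin (Y : Set (E m)) (U : E m → Set U0) (f : E m × U0 → E m) (g : E m × U0 → ℝ)
    (S : ℕ) (y0 : E m) : ℝ :=
  sInf {r : ℝ | ∃ y u, AdmProcH Y U f S y0 y u ∧ r = ∑ t ∈ Finset.range S, g (y t, u t)}

variable [MeasurableSpace U0] [BorelSpace U0]

/-- The discounted occupational measure `γ^α` generated by a process, i.e. the measure with
`γ^α(Q) = (1-α) Σ_{t=0}^∞ α^t 1_Q(y(t),u(t))`. -/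
def discOcc (α : ℝ) (y : ℕ → E m) (u : ℕ → U0) : Measure (E m × U0) :=
  Measure.sum fun t : ℕ => (ENNReal.ofReal ((1 - α) * α ^ t)) • Measure.dirac (y t, u t)

/-- The occupational measure over `{0,...,S-1}` generated by a process, i.e. the measure with
`γ_S(Q) = (1/S) Σ_{t=0}^{S-1} 1_Q(y(t),u(t))`. -/
def occS (S : ℕ) (y : ℕ → E m) (u : ℕ → U0) : Measure (E m × U0) :=
  ((S : ℝ≥0∞))⁻¹ • ∑ t ∈ Finset.range S, Measure.dirac (y t, u t)

/-- `Γ_α(y0)`: the set of discounted occupational measures of admissible processes from `y0`. -/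
def GammaA (Y : Set (E m)) (U : E m → Set U0) (f : E m × U0 → E m) (α : ℝ) (y0 : E m) :
    Set (ProbabilityMeasure (E m × U0)) :=
  {γ | ∃ y u, AdmProc Y U f y0 y u ∧ (γ : Measure (E m × U0)) = discOcc α y u}

/-- `Γ_α := ∪_{y0 ∈ Y} Γ_α(y0)`. -/
def GammaAall (Y : Set (E m)) (U : E m → Set U0) (f : E m × U0 → E m) (α : ℝ) :
    Set (ProbabilityMeasure (E m × U0)) :=
  ⋃ y0 ∈ Y, GammaA Y U f α y0

/-- `Γ(S)`: the set of occupational measures over `{0,...,S-1}` of admissible processes on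
horizon `S`, over all initial conditions in `Y`. -/
def GammaSset (Y : Set (E m)) (U : E m → Set U0) (f : E m × U0 → E m) (S : ℕ) :
    Set (ProbabilityMeasure (E m × U0)) :=
  {γ | ∃ y0 ∈ Y, ∃ y u, AdmProcH Y U f S y0 y u ∧ (γ : Measure (E m × U0)) = occS S y u}

/-- `W_α(y0)`: probability measures `γ` concentrated on `G` such that
`∫_G [α(φ(f(y,u))-φ(y)) + (1-α)(φ(y0)-φ(y))] dγ = 0` for all continuous `φ : Y → ℝ`. -/
def Wa (Y : Set (E m)) (U : E m → Set U0) (f : E m × U0 → E m) (α : ℝ) (y0 : E m) :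
    Set (ProbabilityMeasure (E m × U0)) :=
  {γ | (γ : Measure (E m × U0)) (graphG Y U f)ᶜ = 0 ∧
    ∀ φ : E m → ℝ, ContinuousOn φ Y →
      ∫ p, (α * (φ (f p) - φ p.1) + (1 - α) * (φ y0 - φ p.1))
        ∂(γ : Measure (E m × U0)) = 0}

/-- `W`: probability measures `γ` concentrated on `G` such that
`∫_G (φ(f(y,u))-φ(y)) dγ = 0` for all continuous `φ : Y → ℝ`. -/
def Wset (Y : Set (E m)) (U : E m → Set U0) (f : E m × U0 → E m) :
    Set (ProbabilityMeasure (E m × U0)) :=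
  {γ | (γ : Measure (E m × U0)) (graphG Y U f)ᶜ = 0 ∧
    ∀ φ : E m → ℝ, ContinuousOn φ Y →
      ∫ p, (φ (f p) - φ p.1) ∂(γ : Measure (E m × U0)) = 0}

/-- `g*_α(y0)`: the optimal value of the IDLP problem over `W_α(y0)`. -/
def gStarA (Y : Set (E m)) (U : E m → Set U0) (f : E m × U0 → E m) (g : E m × U0 → ℝ)
    (α : ℝ) (y0 : E m) : ℝ :=
  sInf {r : ℝ | ∃ γ ∈ Wa Y U f α y0, r = ∫ p, g p ∂(γ : Measure (E m × U0))}

/-- `g*`: the optimal value of the IDLP problem over `W`. -/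
def gStar (Y : Set (E m)) (U : E m → Set U0) (f : E m × U0 → E m) (g : E m × U0 → ℝ) : ℝ :=
  sInf {r : ℝ | ∃ γ ∈ Wset Y U f, r = ∫ p, g p ∂(γ : Measure (E m × U0))}

/-- Membership in the class `LS` of bounded lower semicontinuous functions `Y → ℝ`. -/
def BddLscOn (Y : Set (E m)) (ψ : E m → ℝ) : Prop :=
  LowerSemicontinuousOn ψ Y ∧ ∃ C : ℝ, ∀ y ∈ Y, |ψ y| ≤ C

/-- The inner infimum in the max-min problem (discounted case):
`inf_{(y,u) ∈ G} { g(y,u) + α(ψ(f(y,u))-ψ(y)) + (1-α)(ψ(y0)-ψ(y)) }`. -/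
def muA (Y : Set (E m)) (U : E m → Set U0) (f : E m × U0 → E m) (g : E m × U0 → ℝ)
    (α : ℝ) (y0 : E m) (ψ : E m → ℝ) : ℝ :=
  sInf {s : ℝ | ∃ p ∈ graphG Y U f,
    s = g p + α * (ψ (f p) - ψ p.1) + (1 - α) * (ψ y0 - ψ p.1)}

/-- `μ*_α(y0) := sup_{ψ ∈ LS} inf_{(y,u) ∈ G} {...}`. -/
def muStarA (Y : Set (E m)) (U : E m → Set U0) (f : E m × U0 → E m) (g : E m × U0 → ℝ)
    (α : ℝ) (y0 : E m) : ℝ :=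
  sSup {r : ℝ | ∃ ψ : E m → ℝ, BddLscOn Y ψ ∧ r = muA Y U f g α y0 ψ}

/-- The inner infimum in the max-min problem (average case):
`inf_{(y,u) ∈ G} { g(y,u) + ψ(f(y,u)) - ψ(y) }`. -/
def muBar (Y : Set (E m)) (U : E m → Set U0) (f : E m × U0 → E m) (g : E m × U0 → ℝ)
    (ψ : E m → ℝ) : ℝ :=
  sInf {s : ℝ | ∃ p ∈ graphG Y U f, s = g p + ψ (f p) - ψ p.1}

/-- `μ* := sup_{ψ ∈ LS} inf_{(y,u) ∈ G} { g(y,u) + ψ(f(y,u)) - ψ(y) }`. -/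
def muStar (Y : Set (E m)) (U : E m → Set U0) (f : E m × U0 → E m) (g : E m × U0 → ℝ) : ℝ :=
  sSup {r : ℝ | ∃ ψ : E m → ℝ, BddLscOn Y ψ ∧ r = muBar Y U f g ψ}

/-- The convex hull of a set of probability measures: all finite convex combinations. -/
def convCombos {X : Type*} [MeasurableSpace X] (Γ : Set (ProbabilityMeasure X)) :
    Set (ProbabilityMeasure X) :=
  {γ | ∃ (n : ℕ) (w : Fin n → ℝ) (μs : Fin n → ProbabilityMeasure X),
    (∀ i, 0 ≤ w i) ∧ (∑ i, w i) = 1 ∧ (∀ i, μs i ∈ Γ) ∧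
    (γ : Measure X) = ∑ i, ENNReal.ofReal (w i) • (μs i : Measure X)}

lemma graph_closed_aux (Y : Set (E m)) (hYc : IsCompact Y)
    (U : E m → Set U0) (hUusc : UscOn Y U) (hUcomp : ∀ y ∈ Y, IsCompact (U y)) :
    IsClosed {p : E m × U0 | p.1 ∈ Y ∧ p.2 ∈ U p.1} := by
  apply IsSeqClosed.isClosed
  intro s p hs hsp
  have hp1 : Tendsto (fun n => (s n).1) atTop (𝓝 p.1) :=
    (continuous_fst.tendsto p).comp hsp
  have hp2 : Tendsto (fun n => (s n).2) atTop (𝓝 p.2) :=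
    (continuous_snd.tendsto p).comp hsp
  have hpY : p.1 ∈ Y :=
    hYc.isClosed.mem_of_tendsto hp1 (Filter.Eventually.of_forall fun n => (hs n).1)
  refine ⟨hpY, ?_⟩
  by_contra hpu
  have hUcl : IsClosed (U p.1) := (hUcomp p.1 hpY).isClosed
  have hopen : IsOpen (U p.1)ᶜ := hUcl.isOpen_compl
  obtain ⟨ε, hε, hball⟩ := Metric.isOpen_iff.mp hopen p.2 hpu
  set V : Set U0 := (Metric.closedBall p.2 (ε / 2))ᶜ with hV
  have hVopen : IsOpen V := Metric.isClosed_closedBall.isOpen_compl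
  have hVsub : U p.1 ⊆ V := by
    intro v hv
    intro hvb
    have : v ∈ Metric.ball p.2 ε := by
      have := Metric.mem_closedBall.mp hvb
      exact Metric.mem_ball.mpr (lt_of_le_of_lt this (by linarith))
    exact (hball this) hv
  obtain ⟨O, hOopen, hpO, hOV⟩ := hUusc p.1 hpY V hVopen hVsub
  have h1 : ∀ᶠ n in atTop, (s n).1 ∈ O := hp1 (hOopen.mem_nhds hpO)
  have h2 : ∀ᶠ n in atTop, (s n).2 ∈ Metric.ball p.2 (ε / 2) :=
    hp2 (Metric.ball_mem_nhds p.2 (by linarith))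
  obtain ⟨n, hn1, hn2⟩ := (h1.and h2).exists
  have : (s n).2 ∈ V := hOV (s n).1 ⟨hn1, (hs n).1⟩ (hs n).2
  exact this (Metric.mem_closedBall.mpr (le_of_lt (Metric.mem_ball.mp hn2)))

theorem stmt0 {m : ℕ} {U0 : Type*} [MetricSpace U0] [CompactSpace U0]
    [MeasurableSpace U0] [BorelSpace U0]
    (Y : Set (E m)) (hYne : Y.Nonempty) (hYc : IsCompact Y)
    (U : E m → Set U0) (hUusc : UscOn Y U) (hUcomp : ∀ y ∈ Y, IsCompact (U y))
    (f : E m × U0 → E m) (hf : Continuous f)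
    (g : E m × U0 → ℝ) (hg : Continuous g)
    (α : ℝ) (hα : α ∈ Set.Ioo (0:ℝ) 1)
    (y0 : E m) (hy0 : y0 ∈ Y)
    (hA1 : ∃ y u, AdmProc Y U f y0 y u) :
    ∃ ybar ubar, AdmProc Y U f y0 ybar ubar ∧
      discountedCost g α ybar ubar = Valpha Y U f g α y0 := by
  classical
  set X := (ℕ → E m) × (ℕ → U0)
  set K : Set X := {p | AdmProc Y U f y0 p.1 p.2} with hK
  set F : X → ℝ := fun p => discountedCost g α p.1 p.2 with hF
  -- K is nonempty
  obtain ⟨y1, u1, hadm1⟩ := hA1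
  have hKne : K.Nonempty := ⟨(y1, u1), hadm1⟩
  -- graph of U is closed
  have hgr : IsClosed {p : E m × U0 | p.1 ∈ Y ∧ p.2 ∈ U p.1} :=
    graph_closed_aux Y hYc U hUusc hUcomp
  -- K is closed
  have hKcl : IsClosed K := by
    have : K = {p : X | p.1 0 = y0} ∩
        (⋂ t : ℕ, {p : X | p.1 (t + 1) = f (p.1 t, p.2 t)}) ∩
        (⋂ t : ℕ, {p : X | p.1 t ∈ Y ∧ p.2 t ∈ U (p.1 t)}) := by
      ext p
      simp only [hK, AdmProc, Set.mem_inter_iff, Set.mem_iInter, Set.mem_setOf_eq]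
      constructor
      · rintro ⟨h0, h1⟩
        exact ⟨⟨h0, fun t => (h1 t).1⟩, fun t => ⟨(h1 t).2.1, (h1 t).2.2⟩⟩
      · rintro ⟨⟨h0, h1⟩, h2⟩
        exact ⟨h0, fun t => ⟨h1 t, (h2 t).1, (h2 t).2⟩⟩
    rw [this]
    refine IsClosed.inter (IsClosed.inter ?_ ?_) ?_
    · exact isClosed_eq ((continuous_apply 0).comp continuous_fst) continuous_const
    · refine isClosed_iInter fun t => isClosed_eq ?_ ?_
      · exact (continuous_apply (t + 1)).comp continuous_fst
      · exact hf.comp ((((continuous_apply t).comp continuous_fst)).prodMk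
          ((continuous_apply t).comp continuous_snd))
    · refine isClosed_iInter fun t => ?_
      have hcont : Continuous fun p : X => (p.1 t, p.2 t) :=
        (((continuous_apply t).comp continuous_fst)).prodMk
          ((continuous_apply t).comp continuous_snd)
      exact hgr.preimage hcont
  -- K is compact
  have hKcomp : IsCompact K := by
    have hsub : K ⊆ (Set.univ.pi fun _ : ℕ => Y) ×ˢ (Set.univ : Set (ℕ → U0)) := by
      rintro ⟨y, u⟩ ⟨h0, h1⟩
      exact ⟨fun t _ => (h1 t).2.1, trivial⟩
    exact ((isCompact_univ_pi fun _ => hYc).prod isCompact_univ).of_isClosed_subset hKcl hsub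
  -- g bounded on Y × univ
  have : Nonempty U0 := ⟨u1 0⟩
  obtain ⟨C, hC⟩ := (hYc.prod isCompact_univ).exists_bound_of_continuousOn
    (hg.continuousOn : ContinuousOn g (Y ×ˢ (Set.univ : Set U0)))
  set M := max C 0 with hM
  have hM0 : 0 ≤ M := le_max_right _ _
  have hgbd : ∀ q : E m × U0, q.1 ∈ Y → |g q| ≤ M := by
    intro q hq
    exact le_trans (hC q ⟨hq, trivial⟩) (le_max_left _ _)
  -- F is continuous on K
  have hFcont : ContinuousOn F K := by
    rw [continuousOn_iff_continuous_restrict]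
    have : (K.domRestrict F) = fun p : K =>
        ∑' t : ℕ, α ^ t * g (((p : X)).1 t, ((p : X)).2 t) := by
      funext p; rfl
    rw [this]
    apply continuous_tsum
      (f := fun t (p : K) => α ^ t * g (((p : X)).1 t, ((p : X)).2 t))
      (u := fun t => α ^ t * M)
    · intro t
      exact continuous_const.mul (hg.comp
        ((((continuous_apply t).comp (continuous_fst.comp continuous_subtype_val))).prodMk
          ((continuous_apply t).comp (continuous_snd.comp continuous_subtype_val))))
    · exact (summable_geometric_of_lt_one hα.1.le hα.2).mul_right M
    · intro t p
      have hαt : (0:ℝ) ≤ α ^ t := pow_nonneg hα.1.le t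
      have hyY : ((p : X)).1 t ∈ Y := ((p.2).2 t).2.1
      calc ‖α ^ t * g (((p : X)).1 t, ((p : X)).2 t)‖
          = α ^ t * |g (((p : X)).1 t, ((p : X)).2 t)| := by
            rw [Real.norm_eq_abs, abs_mul, abs_of_nonneg hαt]
        _ ≤ α ^ t * M := by
            exact mul_le_mul_of_nonneg_left (hgbd _ hyY) hαt
  -- minimizer exists
  obtain ⟨p, hpK, hmin⟩ := hKcomp.exists_isMinOn hKne hFcont
  have hmin' : ∀ q ∈ K, F p ≤ F q := fun q hq => hmin hq
  refine ⟨p.1, p.2, hpK, ?_⟩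
  have hset : {r : ℝ | ∃ y u, AdmProc Y U f y0 y u ∧ r = discountedCost g α y u} = F '' K := by
    ext r
    constructor
    · rintro ⟨y, u, hadm, rfl⟩
      exact ⟨(y, u), hadm, rfl⟩
    · rintro ⟨q, hq, rfl⟩
      exact ⟨q.1, q.2, hq, rfl⟩
  unfold Valpha
  rw [hset]
  refine le_antisymm ?_ ?_
  · refine le_csInf ⟨F p, p, hpK, rfl⟩ ?_
    rintro r ⟨q, hq, rfl⟩
    exact hmin' q hq
  · refine csInf_le ⟨F p, ?_⟩ ⟨p, hpK, rfl⟩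
    rintro r ⟨q, hq, rfl⟩
    exact hmin' q hq

end LPOC
end
end

section
/- For every y0 ∈ Y satisfying Assumption A1 and every α ∈ (0,1), the discounted occupational measure generated by any admissible process from y0 belongs to W_α(y0); that is, Γ_α(y0) ⊂ W_α(y0). Consequently g*_α(y0) ≤ (1−α)V_α(y0). -/
open MeasureTheory Filter Topology Set ENNReal

noncomputable section

namespace LPOC

variable {m : ℕ} {U0 : Type*} [MetricSpace U0]

variable [MeasurableSpace U0] [BorelSpace U0]

section Aux

variable {m : ℕ} {U0 : Type*} [MetricSpace U0] [CompactSpace U0]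
    [MeasurableSpace U0] [BorelSpace U0]

lemma discOcc_range_compl {α : ℝ} (hα : α ∈ Set.Ioo (0:ℝ) 1) (y : ℕ → E m) (u : ℕ → U0) :
    discOcc α y u ((Set.range fun t => (y t, u t))ᶜ) = 0 := by
  have hmeas : MeasurableSet (Set.range fun t => (y t, u t)) :=
    (Set.countable_range _).measurableSet
  rw [discOcc, Measure.sum_apply _ hmeas.compl]
  have : ∀ t : ℕ, ((ENNReal.ofReal ((1 - α) * α ^ t)) •
      Measure.dirac (y t, u t) : Measure (E m × U0)) ((Set.range fun t => (y t, u t))ᶜ) = 0 := by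
    intro t
    rw [Measure.smul_apply, Measure.dirac_apply' _ hmeas.compl]
    have : (y t, u t) ∉ (Set.range fun t => (y t, u t))ᶜ := by
      simp only [Set.mem_compl_iff, Set.mem_range, not_not]
      exact ⟨t, rfl⟩
    rw [Set.indicator_of_notMem this]
    simp
  simp [this]

lemma discOcc_isProbability {α : ℝ} (hα : α ∈ Set.Ioo (0:ℝ) 1) (y : ℕ → E m) (u : ℕ → U0) :
    IsProbabilityMeasure (discOcc α y u) := by
  obtain ⟨hα0, hα1⟩ := hα
  constructor
  rw [discOcc, Measure.sum_apply _ MeasurableSet.univ]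
  have h1 : ∀ t : ℕ, ((ENNReal.ofReal ((1 - α) * α ^ t)) •
      Measure.dirac (y t, u t) : Measure (E m × U0)) Set.univ
      = ENNReal.ofReal ((1 - α) * α ^ t) := by
    intro t; simp
  rw [tsum_congr h1]
  have hnn : ∀ t : ℕ, 0 ≤ (1 - α) * α ^ t := fun t =>
    mul_nonneg (by linarith) (pow_nonneg hα0.le t)
  have hsum : Summable fun t : ℕ => (1 - α) * α ^ t :=
    (summable_geometric_of_lt_one hα0.le hα1).mul_left _
  rw [← ENNReal.ofReal_tsum_of_nonneg hnn hsum, tsum_mul_left,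
    tsum_geometric_of_lt_one hα0.le hα1]
  rw [mul_inv_cancel₀ (by linarith : (1:ℝ) - α ≠ 0)]
  simp

lemma integral_discOcc {α : ℝ} (hα : α ∈ Set.Ioo (0:ℝ) 1) {Y : Set (E m)} (hYc : IsCompact Y)
    {y : ℕ → E m} {u : ℕ → U0} (hy : ∀ t, y t ∈ Y)
    {h : E m × U0 → ℝ} (hh : Continuous h) :
    ∫ p, h p ∂(discOcc α y u) = ∑' t : ℕ, (1 - α) * α ^ t * h (y t, u t) := by
  obtain ⟨hα0, hα1⟩ := hα
  have hnn : ∀ t : ℕ, 0 ≤ (1 - α) * α ^ t := fun t =>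
    mul_nonneg (by linarith) (pow_nonneg hα0.le t)
  haveI := discOcc_isProbability ⟨hα0, hα1⟩ y u
  have hKc : IsCompact (Y ×ˢ (Set.univ : Set U0)) := hYc.prod isCompact_univ
  obtain ⟨C, hC⟩ := hKc.exists_bound_of_continuousOn hh.continuousOn
  have hrange : (Set.range fun t => (y t, u t)) ⊆ Y ×ˢ (Set.univ : Set U0) := by
    rintro p ⟨t, rfl⟩; exact ⟨hy t, Set.mem_univ _⟩
  have hnull : discOcc α y u ((Y ×ˢ (Set.univ : Set U0))ᶜ) = 0 :=
    measure_mono_null (Set.compl_subset_compl.mpr hrange)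
      (discOcc_range_compl ⟨hα0, hα1⟩ y u)
  have hint : Integrable h (discOcc α y u) := by
    refine Integrable.mono' (integrable_const C) hh.aestronglyMeasurable ?_
    rw [Filter.eventually_iff, mem_ae_iff]
    refine measure_mono_null ?_ hnull
    intro p hp
    simp only [Set.mem_compl_iff, Set.mem_setOf_eq] at hp ⊢
    exact fun hpK => hp (hC p hpK)
  rw [discOcc] at hint ⊢
  rw [integral_sum_measure hint]
  refine tsum_congr fun t => ?_
  rw [integral_smul_measure, integral_dirac, ENNReal.toReal_ofReal (hnn t), smul_eq_mul]

lemma tsum_telescope_zero {α : ℝ} (hα : α ∈ Set.Ioo (0:ℝ) 1) {b : ℕ → ℝ} {C : ℝ}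
    (hb : ∀ t, |b t| ≤ C) :
    ∑' t : ℕ, (1 - α) * α ^ t * (α * (b (t + 1) - b t) + (1 - α) * (b 0 - b t)) = 0 := by
  obtain ⟨hα0, hα1⟩ := hα
  set F : ℕ → ℝ := fun t => (1 - α) * α ^ t * (α * (b (t + 1) - b t) + (1 - α) * (b 0 - b t))
    with hF
  have hC0 : 0 ≤ C := le_trans (abs_nonneg _) (hb 0)
  have hsum : Summable F := by
    refine Summable.of_norm_bounded
      (((summable_geometric_of_lt_one hα0.le hα1).mul_left ((1 - α) * (2 * C)))) fun t => ?_
    have h1 : |α * (b (t + 1) - b t) + (1 - α) * (b 0 - b t)| ≤ 2 * C := by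
      have e1 : |b (t + 1) - b t| ≤ 2 * C := by
        calc |b (t + 1) - b t| ≤ |b (t+1)| + |b t| := abs_sub _ _
        _ ≤ 2 * C := by have := hb (t+1); have := hb t; linarith
      have e2 : |b 0 - b t| ≤ 2 * C := by
        calc |b 0 - b t| ≤ |b 0| + |b t| := abs_sub _ _
        _ ≤ 2 * C := by have := hb 0; have := hb t; linarith
      calc |α * (b (t + 1) - b t) + (1 - α) * (b 0 - b t)|
          ≤ |α * (b (t + 1) - b t)| + |(1 - α) * (b 0 - b t)| := abs_add_le _ _
        _ = α * |b (t + 1) - b t| + (1 - α) * |b 0 - b t| := by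
            rw [abs_mul, abs_mul, abs_of_nonneg hα0.le, abs_of_nonneg (by linarith : (0:ℝ) ≤ 1 - α)]
        _ ≤ α * (2 * C) + (1 - α) * (2 * C) := by
            have := mul_le_mul_of_nonneg_left e1 hα0.le
            have := mul_le_mul_of_nonneg_left e2 (by linarith : (0:ℝ) ≤ 1 - α)
            linarith
        _ = 2 * C := by ring
    have hnorm : ‖F t‖ = (1 - α) * α ^ t * |α * (b (t + 1) - b t) + (1 - α) * (b 0 - b t)| := by
      rw [hF]
      rw [Real.norm_eq_abs, abs_mul, abs_mul, abs_of_nonneg (by linarith : (0:ℝ) ≤ 1 - α),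
        abs_of_nonneg (pow_nonneg hα0.le t)]
    rw [hnorm]
    calc (1 - α) * α ^ t * |α * (b (t + 1) - b t) + (1 - α) * (b 0 - b t)|
        ≤ (1 - α) * α ^ t * (2 * C) := by
          refine mul_le_mul_of_nonneg_left h1 ?_
          exact mul_nonneg (by linarith) (pow_nonneg hα0.le t)
      _ = (1 - α) * (2 * C) * α ^ t := by ring
  -- partial sums
  have hdecomp : ∀ t : ℕ, F t = (1 - α) * (α ^ (t + 1) * b (t + 1) - α ^ t * b t)
      + (1 - α) ^ 2 * b 0 * α ^ t := by
    intro t; rw [hF]; ring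
  have hpartial : ∀ n : ℕ, ∑ t ∈ Finset.range n, F t =
      (1 - α) * (α ^ n * b n - α ^ 0 * b 0) + (1 - α) ^ 2 * b 0 * ∑ t ∈ Finset.range n, α ^ t := by
    intro n
    rw [Finset.sum_congr rfl fun t _ => hdecomp t, Finset.sum_add_distrib,
      ← Finset.mul_sum, ← Finset.mul_sum,
      Finset.sum_range_sub (fun t => α ^ t * b t)]
  have htend : Filter.Tendsto (fun n => ∑ t ∈ Finset.range n, F t) Filter.atTop (nhds 0) := by
    have h1 : Filter.Tendsto (fun n : ℕ => α ^ n * b n) Filter.atTop (nhds 0) := by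
      have hgeo : Filter.Tendsto (fun n : ℕ => C * α ^ n) Filter.atTop (nhds 0) := by
        simpa using (tendsto_pow_atTop_nhds_zero_of_lt_one hα0.le hα1).const_mul C
      apply squeeze_zero_norm (fun n => ?_) hgeo
      rw [Real.norm_eq_abs, abs_mul, abs_of_nonneg (pow_nonneg hα0.le _)]
      calc α ^ n * |b n| ≤ α ^ n * C := by
            exact mul_le_mul_of_nonneg_left (hb n) (pow_nonneg hα0.le _)
        _ = C * α ^ n := by ring
    have h2 : Filter.Tendsto (fun n => ∑ t ∈ Finset.range n, α ^ t) Filter.atTop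
        (nhds ((1 - α)⁻¹)) :=
      (hasSum_geometric_of_lt_one hα0.le hα1).tendsto_sum_nat
    have := (((h1.sub_const (α ^ 0 * b 0)).const_mul (1 - α)).add
      (h2.const_mul ((1 - α) ^ 2 * b 0)))
    have heq : (1 - α) * (0 - α ^ 0 * b 0) + (1 - α) ^ 2 * b 0 * (1 - α)⁻¹ = 0 := by
      have hne : (1:ℝ) - α ≠ 0 := by linarith
      field_simp
      ring
    rw [heq] at this
    exact this.congr fun n => (hpartial n).symm
  exact tendsto_nhds_unique hsum.hasSum.tendsto_sum_nat htend

lemma mem_Wa_of_discOcc {α : ℝ} (hα : α ∈ Set.Ioo (0:ℝ) 1)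
    {Y : Set (E m)} (hYc : IsCompact Y) {U : E m → Set U0} {f : E m × U0 → E m}
    (hf : Continuous f) {y0 : E m} (hy0 : y0 ∈ Y) {y : ℕ → E m} {u : ℕ → U0}
    (hadm : AdmProc Y U f y0 y u) (γ : ProbabilityMeasure (E m × U0))
    (hγ : (γ : Measure (E m × U0)) = discOcc α y u) :
    γ ∈ Wa Y U f α y0 := by
  obtain ⟨hstart, hstep⟩ := hadm
  have hyY : ∀ t, y t ∈ Y := fun t => (hstep t).2.1
  have hrangeG : (Set.range fun t => (y t, u t)) ⊆ graphG Y U f := by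
    rintro p ⟨t, rfl⟩
    refine ⟨hyY t, (hstep t).2.2, ?_⟩
    show f (y t, u t) ∈ Y
    rw [← (hstep t).1]; exact hyY (t + 1)
  have hnullG : (γ : Measure (E m × U0)) (graphG Y U f)ᶜ = 0 := by
    rw [hγ]
    exact measure_mono_null (Set.compl_subset_compl.mpr hrangeG) (discOcc_range_compl hα y u)
  refine ⟨hnullG, fun φ hφ => ?_⟩
  -- Tietze extension
  obtain ⟨ψ, hψ⟩ := ContinuousMap.exists_restrict_eq (Y := ℝ) hYc.isClosed
    ⟨Y.restrict φ, hφ.restrict⟩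
  have hψeq : ∀ z ∈ Y, ψ z = φ z := by
    intro z hz
    have := congrFun (congrArg ContinuousMap.toFun hψ) ⟨z, hz⟩
    exact this
  set h : E m × U0 → ℝ := fun p => α * (ψ (f p) - ψ p.1) + (1 - α) * (ψ y0 - ψ p.1) with hh
  have hhc : Continuous h := by
    have hc := ψ.continuous
    fun_prop
  have haeeq : (fun p : E m × U0 => α * (φ (f p) - φ p.1) + (1 - α) * (φ y0 - φ p.1))
      =ᵐ[(γ : Measure (E m × U0))] h := by
    rw [Filter.EventuallyEq, Filter.eventually_iff, mem_ae_iff]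
    refine measure_mono_null ?_ hnullG
    intro p hp
    simp only [Set.mem_compl_iff, Set.mem_setOf_eq] at hp ⊢
    intro hpG
    apply hp
    obtain ⟨h1, _, h3⟩ := hpG
    rw [hh]
    simp only
    rw [hψeq _ h3, hψeq _ h1, hψeq _ hy0]
  rw [integral_congr_ae haeeq, hγ, integral_discOcc hα hYc hyY hhc]
  obtain ⟨Cb, hCb⟩ := hYc.exists_bound_of_continuousOn ψ.continuous.continuousOn
  have hb : ∀ t, |ψ (y t)| ≤ Cb := fun t => hCb _ (hyY t)
  have hterm : ∀ t : ℕ, (1 - α) * α ^ t * h (y t, u t)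
      = (1 - α) * α ^ t * (α * (ψ (y (t + 1)) - ψ (y t))
        + (1 - α) * (ψ (y 0) - ψ (y t))) := by
    intro t
    rw [hh]
    simp only
    rw [(hstep t).1, hstart]
  rw [tsum_congr hterm]
  exact tsum_telescope_zero hα hb

end Aux

theorem stmt7 {m : ℕ} {U0 : Type*} [MetricSpace U0] [CompactSpace U0]
    [MeasurableSpace U0] [BorelSpace U0]
    (Y : Set (E m)) (hYne : Y.Nonempty) (hYc : IsCompact Y)
    (U : E m → Set U0) (hUusc : UscOn Y U) (hUcomp : ∀ y ∈ Y, IsCompact (U y))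
    (f : E m × U0 → E m) (hf : Continuous f)
    (g : E m × U0 → ℝ) (hg : Continuous g)
    (α : ℝ) (hα : α ∈ Set.Ioo (0:ℝ) 1)
    (y0 : E m) (hy0 : y0 ∈ Y) (hA1 : ∃ y u, AdmProc Y U f y0 y u) :
    GammaA Y U f α y0 ⊆ Wa Y U f α y0 ∧
    gStarA Y U f g α y0 ≤ (1 - α) * Valpha Y U f g α y0 := by
  obtain ⟨hα0, hα1⟩ := hα
  have h1αpos : (0:ℝ) < 1 - α := by linarith
  have part1 : GammaA Y U f α y0 ⊆ Wa Y U f α y0 := by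
    rintro γ ⟨y, u, hadm, hγ⟩
    exact mem_Wa_of_discOcc ⟨hα0, hα1⟩ hYc hf hy0 hadm γ hγ
  refine ⟨part1, ?_⟩
  have hKc : IsCompact (Y ×ˢ (Set.univ : Set U0)) := hYc.prod isCompact_univ
  obtain ⟨C, hC⟩ := hKc.exists_bound_of_continuousOn hg.continuousOn
  set S' : Set ℝ := {r : ℝ | ∃ γ ∈ Wa Y U f α y0, r = ∫ p, g p ∂(γ : Measure (E m × U0))}
    with hS'
  have hlb : ∀ r ∈ S', -C ≤ r := by
    rintro r ⟨γ, ⟨hγnull, -⟩, rfl⟩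
    have hKnull : (γ : Measure (E m × U0)) ((Y ×ˢ (Set.univ : Set U0))ᶜ) = 0 := by
      refine measure_mono_null (Set.compl_subset_compl.mpr ?_) hγnull
      rintro ⟨a, b⟩ ⟨h1, -, -⟩
      exact ⟨h1, Set.mem_univ _⟩
    have haeK : ∀ᵐ p ∂(γ : Measure (E m × U0)), p ∈ Y ×ˢ (Set.univ : Set U0) := by
      rw [Filter.eventually_iff, mem_ae_iff]
      exact measure_mono_null (fun p hp => hp) hKnull
    have hint : Integrable g (γ : Measure (E m × U0)) := by
      refine Integrable.mono' (integrable_const C) hg.aestronglyMeasurable ?_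
      filter_upwards [haeK] with p hp using hC p hp
    have hmono : ∫ p, (-C : ℝ) ∂(γ : Measure (E m × U0)) ≤
        ∫ p, g p ∂(γ : Measure (E m × U0)) := by
      refine integral_mono_ae (integrable_const _) hint ?_
      filter_upwards [haeK] with p hp
      have := hC p hp
      rw [Real.norm_eq_abs] at this
      linarith [abs_le.mp this |>.1]
    simpa using hmono
  have hbdd : BddBelow S' := ⟨-C, hlb⟩
  have hkey : ∀ r ∈ {r : ℝ | ∃ y u, AdmProc Y U f y0 y u ∧ r = discountedCost g α y u},
      gStarA Y U f g α y0 ≤ (1 - α) * r := by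
    rintro r ⟨y, u, hadm, rfl⟩
    have hyY : ∀ t, y t ∈ Y := fun t => (hadm.2 t).2.1
    haveI hprob := discOcc_isProbability ⟨hα0, hα1⟩ y u
    set γ : ProbabilityMeasure (E m × U0) := ⟨discOcc α y u, hprob⟩ with hγdef
    have hγcoe : (γ : Measure (E m × U0)) = discOcc α y u := rfl
    have hγmem : γ ∈ Wa Y U f α y0 :=
      mem_Wa_of_discOcc ⟨hα0, hα1⟩ hYc hf hy0 hadm γ hγcoe
    have hintval : ∫ p, g p ∂(γ : Measure (E m × U0)) = (1 - α) * discountedCost g α y u := by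
      rw [hγcoe, integral_discOcc ⟨hα0, hα1⟩ hYc hyY hg, discountedCost, ← tsum_mul_left]
      exact tsum_congr fun t => by ring
    have hmem : (1 - α) * discountedCost g α y u ∈ S' := ⟨γ, hγmem, hintval.symm⟩
    exact csInf_le hbdd hmem
  have hne : {r : ℝ | ∃ y u, AdmProc Y U f y0 y u ∧ r = discountedCost g α y u}.Nonempty := by
    obtain ⟨y, u, hadm⟩ := hA1
    exact ⟨discountedCost g α y u, y, u, hadm, rfl⟩
  have hdiv : gStarA Y U f g α y0 / (1 - α) ≤ Valpha Y U f g α y0 := by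
    refine le_csInf hne fun r hr => ?_
    rw [div_le_iff₀ h1αpos]
    calc gStarA Y U f g α y0 ≤ (1 - α) * r := hkey r hr
      _ = r * (1 - α) := by ring
  calc gStarA Y U f g α y0 = (1 - α) * (gStarA Y U f g α y0 / (1 - α)) := by
        field_simp
    _ ≤ (1 - α) * Valpha Y U f g α y0 := by
        exact mul_le_mul_of_nonneg_left hdiv h1αpos.le

end LPOC
end
end

section
/- Let α_i ∈ (0,1) with α_i ↑ 1, y_i ∈ Y, and γ_i ∈ W_{α_i}(y_i) be probability measures on G converging in the weak* topology to a probability measure γ on G. Then γ ∈ W. In particular, the upper topological limit as α ↑ 1 of ∪_{y0∈Y} W_α(y0) is contained in W. -/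
open MeasureTheory Filter Topology Set ENNReal

noncomputable section

namespace LPOC

variable {m : ℕ} {U0 : Type*} [MetricSpace U0]

variable [MeasurableSpace U0] [BorelSpace U0]

/-- The graph `G` is closed. -/
lemma isClosed_graphG (Y : Set (E m)) (hYc : IsCompact Y)
    (U : E m → Set U0) (hUusc : UscOn Y U) (hUcomp : ∀ y ∈ Y, IsCompact (U y))
    (f : E m × U0 → E m) (hf : Continuous f) : IsClosed (graphG Y U f) := by
  rw [← isOpen_compl_iff, isOpen_iff_mem_nhds]
  intro p hp
  by_cases h1 : p.1 ∈ Y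
  · by_cases h2 : f p ∈ Y
    · have h3 : p.2 ∉ U p.1 := fun h => hp ⟨h1, h, h2⟩
      obtain ⟨V1, V2, hV1, hV2, hpV1, hUV2, hdisj⟩ :=
        SeparatedNhds.of_isCompact_isCompact_isClosed isCompact_singleton
          (hUcomp p.1 h1) (hUcomp p.1 h1).isClosed
          (by simpa [Set.disjoint_singleton_left] using h3)
      obtain ⟨O, hO, hpO, hOV⟩ := hUusc p.1 h1 V2 hV2 hUV2
      have : O ×ˢ V1 ∈ 𝓝 p := (hO.prod hV1).mem_nhds ⟨hpO, hpV1 rfl⟩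
      refine Filter.mem_of_superset this ?_
      rintro q ⟨hq1, hq2⟩ hqG
      exact absurd hq2 (Set.disjoint_right.1 hdisj (hOV q.1 ⟨hq1, hqG.1⟩ hqG.2.1))
    · have : f ⁻¹' Yᶜ ∈ 𝓝 p :=
        (hYc.isClosed.isOpen_compl.preimage hf).mem_nhds h2
      exact Filter.mem_of_superset this fun q hq hqG => hq hqG.2.2
  · have : Yᶜ ×ˢ (univ : Set U0) ∈ 𝓝 p :=
      (hYc.isClosed.isOpen_compl.prod isOpen_univ).mem_nhds ⟨h1, trivial⟩
    exact Filter.mem_of_superset this fun q hq hqG => hq.1 hqG.1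

/-- Tietze-type bounded continuous extension of a function continuous on a compact set. -/
lemma exists_bdd_extension (Y : Set (E m)) (hYc : IsCompact Y)
    (φ : E m → ℝ) (hφ : ContinuousOn φ Y) :
    ∃ (ψ : E m → ℝ) (M : ℝ), Continuous ψ ∧ 0 ≤ M ∧ (∀ x, |ψ x| ≤ M) ∧
      ∀ y ∈ Y, ψ y = φ y := by
  obtain ⟨C, hC⟩ := hYc.exists_bound_of_continuousOn hφ
  set M := max C 0 with hM
  have hM0 : 0 ≤ M := le_max_right _ _
  obtain ⟨g, hg⟩ := ContinuousMap.exists_restrict_eq hYc.isClosed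
    ⟨Y.restrict φ, continuousOn_iff_continuous_restrict.1 hφ⟩
  refine ⟨fun x => max (-M) (min (g x) M), M, ?_, hM0, ?_, ?_⟩
  · exact continuous_const.max ((map_continuous g).min continuous_const)
  · intro x
    rw [abs_le]
    exact ⟨le_max_left _ _, max_le (neg_le_self hM0) (min_le_right _ _)⟩
  · intro y hy
    have hgy : g y = φ y := by
      have := congrFun (congrArg DFunLike.coe hg) ⟨y, hy⟩
      exact this
    have hb : |φ y| ≤ M := le_trans (hC y hy) (le_max_left _ _)
    rw [abs_le] at hb
    show -M ⊔ (g y ⊓ M) = φ y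
    rw [hgy, min_eq_left hb.2, max_eq_right hb.1]

theorem stmt15 {m : ℕ} {U0 : Type*} [MetricSpace U0] [CompactSpace U0]
    [MeasurableSpace U0] [BorelSpace U0]
    (Y : Set (E m)) (hYne : Y.Nonempty) (hYc : IsCompact Y)
    (U : E m → Set U0) (hUusc : UscOn Y U) (hUcomp : ∀ y ∈ Y, IsCompact (U y))
    (f : E m × U0 → E m) (hf : Continuous f)
    (α : ℕ → ℝ) (hα : ∀ i, α i ∈ Set.Ioo (0:ℝ) 1) (hα1 : Tendsto α atTop (𝓝 1))
    (yi : ℕ → E m) (hyi : ∀ i, yi i ∈ Y)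
    (γi : ℕ → ProbabilityMeasure (E m × U0)) (hγi : ∀ i, γi i ∈ Wa Y U f (α i) (yi i))
    (γ : ProbabilityMeasure (E m × U0)) (hconv : Tendsto γi atTop (𝓝 γ)) :
    γ ∈ Wset Y U f := by
  have hGclosed := isClosed_graphG Y hYc U hUusc hUcomp f hf
  have hγGc : (γ : Measure (E m × U0)) (graphG Y U f)ᶜ = 0 := by
    have h := ProbabilityMeasure.le_liminf_measure_open_of_tendsto hconv hGclosed.isOpen_compl
    have h0 : Filter.liminf (fun i => (γi i : Measure (E m × U0)) (graphG Y U f)ᶜ) atTop = 0 := by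
      simp only [fun i => (hγi i).1]
      exact Filter.liminf_const 0
    exact le_antisymm (h0 ▸ h) zero_le
  refine ⟨hγGc, ?_⟩
  intro φ hφ
  obtain ⟨ψ, M, hψc, hM0, hψb, hψeq⟩ := exists_bdd_extension Y hYc φ hφ
  set Φ : BoundedContinuousFunction (E m × U0) ℝ := BoundedContinuousFunction.ofNormedAddCommGroup
    (fun p => ψ (f p) - ψ p.1) (by continuity) (2 * M)
    (fun p => by
      have := hψb (f p); have := hψb p.1
      simp only [Real.norm_eq_abs]
      calc |ψ (f p) - ψ p.1| ≤ |ψ (f p)| + |ψ p.1| := abs_sub _ _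
        _ ≤ 2 * M := by linarith) with hΦdef
  have hΦcoe : ⇑Φ = fun p => ψ (f p) - ψ p.1 := rfl
  set T : BoundedContinuousFunction (E m × U0) ℝ := BoundedContinuousFunction.ofNormedAddCommGroup
    (fun p => ψ p.1) (hψc.comp continuous_fst) M
    (fun p => by simpa [Real.norm_eq_abs] using hψb p.1) with hTdef
  have hTcoe : ⇑T = fun p => ψ p.1 := rfl
  -- for each i, from the defining property of `W_α(y_i)`
  have key : ∀ i, ∫ p, Φ p ∂(γi i : Measure (E m × U0)) =
      -((1 - α i) * ∫ p, (ψ (yi i) - ψ p.1) ∂(γi i : Measure (E m × U0))) / α i := by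
    intro i
    have h0 := (hγi i).2 ψ hψc.continuousOn
    have hIΦ : Integrable (fun p => ψ (f p) - ψ p.1) (γi i : Measure (E m × U0)) := by
      rw [← hΦcoe]; exact Φ.integrable _
    have hIK : Integrable (fun p => ψ (yi i) - ψ p.1) (γi i : Measure (E m × U0)) := by
      have : Integrable (fun p : E m × U0 => ψ p.1) (γi i : Measure (E m × U0)) := by
        rw [← hTcoe]; exact T.integrable _
      exact (integrable_const _).sub this
    rw [MeasureTheory.integral_add (hIΦ.const_mul _) (hIK.const_mul _),
      integral_const_mul, integral_const_mul] at h0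
    rw [eq_div_iff (ne_of_gt (hα i).1)]
    rw [hΦcoe]
    linarith
  have hbd : ∀ i, |∫ p, (ψ (yi i) - ψ p.1) ∂(γi i : Measure (E m × U0))| ≤ 2 * M := by
    intro i
    have : ‖∫ p, (ψ (yi i) - ψ p.1) ∂(γi i : Measure (E m × U0))‖ ≤
        (2 * M) * ((γi i : Measure (E m × U0)) Set.univ).toReal := by
      apply MeasureTheory.norm_integral_le_of_norm_le_const
      apply Filter.Eventually.of_forall
      intro p
      have h1 := hψb (yi i); have h2 := hψb p.1
      simp only [Real.norm_eq_abs]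
      calc |ψ (yi i) - ψ p.1| ≤ |ψ (yi i)| + |ψ p.1| := abs_sub _ _
        _ ≤ 2 * M := by linarith
    simpa [Real.norm_eq_abs] using this
  have htendΦ : Tendsto (fun i => ∫ p, Φ p ∂(γi i : Measure (E m × U0))) atTop
      (𝓝 (∫ p, Φ p ∂(γ : Measure (E m × U0)))) :=
    ProbabilityMeasure.tendsto_iff_forall_integral_tendsto.1 hconv Φ
  have hnum : Tendsto (fun i =>
      -((1 - α i) * ∫ p, (ψ (yi i) - ψ p.1) ∂(γi i : Measure (E m × U0)))) atTop (𝓝 0) := by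
    rw [← neg_zero]
    apply Tendsto.neg
    apply squeeze_zero_norm (a := fun i => |1 - α i| * (2 * M))
    · intro i
      rw [Real.norm_eq_abs, abs_mul]
      exact mul_le_mul_of_nonneg_left (hbd i) (abs_nonneg _)
    · have : Tendsto (fun i => |1 - α i| * (2 * M)) atTop (𝓝 (|1 - (1:ℝ)| * (2 * M))) :=
        ((tendsto_const_nhds.sub hα1).abs).mul_const _
      simpa using this
  have htend0 : Tendsto (fun i =>
      -((1 - α i) * ∫ p, (ψ (yi i) - ψ p.1) ∂(γi i : Measure (E m × U0))) / α i) atTop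
      (𝓝 0) := by
    have := hnum.div hα1 one_ne_zero
    rw [zero_div] at this; exact this
  have hΦγ : ∫ p, Φ p ∂(γ : Measure (E m × U0)) = 0 := by
    refine tendsto_nhds_unique ?_ htend0
    exact htendΦ.congr (fun i => (key i))
  have hae : ∀ᵐ p ∂(γ : Measure (E m × U0)), p ∈ graphG Y U f := by
    rw [MeasureTheory.ae_iff]
    exact hγGc
  rw [← hΦγ]
  apply MeasureTheory.integral_congr_ae
  filter_upwards [hae] with p hp
  show φ (f p) - φ p.1 = Φ p
  rw [hΦcoe]
  simp only
  rw [hψeq _ hp.2.2, hψeq _ hp.1]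


end LPOC
end
end

section
/- Let g : ℕ → ℝ satisfy |g(t)| ≤ M for all t, let α ∈ (0,1), and set σ := (1−α) Σ_{t=0}^∞ α^t g(t). Then for every ε > 0 there exists a positive integer T with T ≥ ⌊ ε / ((4M + 4|σ| + ε)(−ln α)) ⌋ such that (1/T) Σ_{t=0}^{T−1} g(t) < σ + ε + 2M/T. -/
open Finset

set_option maxHeartbeats 2000000 in
/-- Lemma 6.2 (discrete-time analog of Grüne's lemma): if `|g(t)| ≤ M` and
`σ = (1-α) Σ_{t=0}^∞ α^t g(t)`, then for every `ε > 0` there is a positive integer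
`T ≥ ⌊ε / ((4M + 4|σ| + ε)(-ln α))⌋` with `(1/T) Σ_{t=0}^{T-1} g(t) < σ + ε + 2M/T`. -/
theorem stmt16 (g : ℕ → ℝ) (M : ℝ) (hg : ∀ t : ℕ, |g t| ≤ M)
    (α : ℝ) (hα : α ∈ Set.Ioo (0:ℝ) 1)
    (σ : ℝ) (hσ : σ = (1 - α) * ∑' t : ℕ, α ^ t * g t)
    (ε : ℝ) (hε : 0 < ε) :
    ∃ T : ℕ, 0 < T ∧ ⌊ε / ((4 * M + 4 * |σ| + ε) * (-Real.log α))⌋ ≤ (T : ℤ) ∧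
      (1 / (T : ℝ)) * ∑ t ∈ Finset.range T, g t < σ + ε + 2 * M / (T : ℝ) := by
  obtain ⟨hα0, hα1⟩ := hα
  have hα1' : (0:ℝ) < 1 - α := by linarith
  have hM : 0 ≤ M := le_trans (abs_nonneg _) (hg 0)
  obtain ⟨S, hST⟩ : ∃ S : ℕ → ℝ, ∀ T, S T = ∑ t ∈ Finset.range T, g t :=
    ⟨_, fun _ => rfl⟩
  -- basic summability facts
  have hgeo : Summable (fun n : ℕ => α ^ n) := summable_geometric_of_lt_one hα0.le hα1
  have hαn : ‖α‖ < 1 := by rwa [Real.norm_eq_abs, abs_of_pos hα0]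
  have hngeo : Summable (fun n : ℕ => (n:ℝ) * α ^ n) := by
    have := summable_pow_mul_geometric_of_norm_lt_one (R := ℝ) 1 hαn
    simpa using this
  have htsum_n : ∑' n : ℕ, (n:ℝ) * α ^ n = α / (1-α)^2 :=
    tsum_coe_mul_geometric_of_norm_lt_one hαn
  have htsum_geo : ∑' n : ℕ, α ^ n = (1-α)⁻¹ := tsum_geometric_of_lt_one hα0.le hα1
  have habsS : ∀ T, |S T| ≤ M * T := by
    intro T
    rw [hST]
    calc |∑ t ∈ Finset.range T, g t| ≤ ∑ t ∈ Finset.range T, |g t| :=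
          Finset.abs_sum_le_sum_abs _ _
      _ ≤ ∑ _t ∈ Finset.range T, M := Finset.sum_le_sum fun t _ => hg t
      _ = M * T := by simp [mul_comm]
  have hsum_g : Summable (fun t : ℕ => α ^ t * g t) := by
    apply Summable.of_norm_bounded (hgeo.mul_left M)
    intro t
    rw [Real.norm_eq_abs, abs_mul, abs_pow, abs_of_pos hα0]
    calc α ^ t * |g t| ≤ α ^ t * M :=
          mul_le_mul_of_nonneg_left (hg t) (by positivity)
      _ = M * α ^ t := by ring
  have hsum_S : Summable (fun T : ℕ => α ^ T * S T) := by
    apply Summable.of_norm_bounded (hngeo.mul_left M)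
    intro T
    rw [Real.norm_eq_abs, abs_mul, abs_pow, abs_of_pos hα0]
    calc α ^ T * |S T| ≤ α ^ T * (M * T) :=
          mul_le_mul_of_nonneg_left (habsS T) (by positivity)
      _ = M * ((T:ℝ) * α ^ T) := by ring
  -- the Fubini step
  set F : ℕ → ℕ → ℝ := fun T t => if t < T then α ^ T * g t else 0 with hF
  have hFrow : ∀ T, ∑' t, F T t = α ^ T * S T := by
    intro T
    rw [tsum_eq_sum (s := Finset.range T) (by
      intro b hb
      simp only [hF]
      rw [if_neg (by simpa using hb)])]
    rw [hST, Finset.mul_sum]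
    apply Finset.sum_congr rfl
    intro t ht
    simp only [hF]
    rw [if_pos (Finset.mem_range.mp ht)]
  have hFrowabs : ∀ T, Summable fun t => |F T t| := by
    intro T
    apply summable_of_ne_finset_zero (s := Finset.range T)
    intro b hb
    simp only [hF]
    rw [if_neg (by simpa using hb), abs_zero]
  have hFrowabs_le : ∀ T, ∑' t, |F T t| ≤ M * ((T:ℝ) * α ^ T) := by
    intro T
    rw [tsum_eq_sum (s := Finset.range T) (by
      intro b hb
      simp only [hF]
      rw [if_neg (by simpa using hb), abs_zero])]
    calc ∑ t ∈ Finset.range T, |F T t| ≤ ∑ _t ∈ Finset.range T, α ^ T * M := by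
          apply Finset.sum_le_sum
          intro t ht
          simp only [hF]
          rw [if_pos (Finset.mem_range.mp ht), abs_mul, abs_pow, abs_of_pos hα0]
          exact mul_le_mul_of_nonneg_left (hg t) (by positivity)
      _ = M * ((T:ℝ) * α ^ T) := by simp [mul_comm, mul_assoc, mul_left_comm]
  have hFunc : Summable (Function.uncurry F) := by
    apply Summable.of_norm
    rw [show (fun p : ℕ × ℕ => ‖Function.uncurry F p‖) = fun p : ℕ × ℕ => |F p.1 p.2| from rfl]
    rw [summable_prod_of_nonneg (fun p => abs_nonneg _)]
    constructor
    · exact fun T => hFrowabs T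
    · apply Summable.of_nonneg_of_le (fun T => tsum_nonneg fun t => abs_nonneg _)
        (fun T => hFrowabs_le T) (hngeo.mul_left M)
  have hFcolsum : ∀ t, Summable fun T => F T t := by
    intro t
    apply Summable.of_norm_bounded (hgeo.mul_left |g t|)
    intro T
    simp only [hF]
    split_ifs with h
    · rw [Real.norm_eq_abs, abs_mul, abs_pow, abs_of_pos hα0]; ring_nf; nlinarith [pow_pos hα0 T, abs_nonneg (g t)]
    · simp; positivity
  have hFcol : ∀ t, ∑' T, F T t = (1-α)⁻¹ * α ^ (t+1) * g t := by
    intro t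
    have h0 := Summable.sum_add_tsum_nat_add (f := fun T => F T t) (t+1) (hFcolsum t)
    have h1 : ∑ i ∈ Finset.range (t+1), F i t = 0 := by
      apply Finset.sum_eq_zero
      intro i hi
      simp only [hF]
      have := Finset.mem_range.mp hi
      rw [if_neg (by omega)]
    have h2 : ∀ i : ℕ, F (i + (t+1)) t = α ^ i * (α ^ (t+1) * g t) := by
      intro i
      simp only [hF]
      rw [if_pos (by omega), pow_add]
      ring
    rw [← h0, h1, zero_add]
    calc ∑' i, F (i + (t+1)) t = ∑' i : ℕ, α ^ i * (α ^ (t+1) * g t) := tsum_congr h2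
      _ = (1-α)⁻¹ * α ^ (t+1) * g t := by rw [tsum_mul_right, htsum_geo]; ring
  -- the key identity
  have hkey1 : ∑' T, α ^ T * S T = (α / (1-α)) * ∑' t : ℕ, α ^ t * g t := by
    calc ∑' T, α ^ T * S T = ∑' T, ∑' t, F T t := by
          exact (tsum_congr hFrow).symm
      _ = ∑' t, ∑' T, F T t := (Summable.tsum_comm hFunc).symm
      _ = ∑' t, (1-α)⁻¹ * α ^ (t+1) * g t := tsum_congr hFcol
      _ = ∑' t : ℕ, (α / (1-α)) * (α ^ t * g t) := by
          apply tsum_congr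
          intro t
          rw [pow_succ]
          field_simp
      _ = (α / (1-α)) * ∑' t : ℕ, α ^ t * g t := tsum_mul_left
  have hQ : ∑' t : ℕ, α ^ t * g t = σ / (1-α) := by
    rw [hσ]
    field_simp
  have hP : ∑' T, α ^ T * S T = σ * (α / (1-α)^2) := by
    rw [hkey1, hQ]
    field_simp
  -- contradiction setup
  by_contra hcon
  push_neg at hcon
  set D : ℝ := 4 * M + 4 * |σ| + ε with hD
  have hDpos : 0 < D := by positivity
  clear_value D
  have hL : Real.log α < 0 := Real.log_neg hα0 hα1
  set T0 : ℝ := ε / (D * (-Real.log α)) with hT0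
  have hT0pos : 0 < T0 := by
    apply div_pos hε
    exact mul_pos hDpos (by linarith)
  clear_value T0
  set N : ℕ := max 1 ⌊T0⌋.toNat with hNdef
  have hN1 : 1 ≤ N := le_max_left _ _
  have hfloorN : ⌊T0⌋ ≤ (N : ℤ) := by
    refine le_trans (Int.self_le_toNat _) ?_
    exact_mod_cast le_max_right 1 ⌊T0⌋.toNat
  clear_value N
  have hSlow : ∀ T : ℕ, N ≤ T → (σ + ε) * T + 2 * M ≤ S T := by
    intro T hT
    have hTpos : 0 < T := lt_of_lt_of_le hN1 hT
    have hTR : (0:ℝ) < T := by exact_mod_cast hTpos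
    have h1 := hcon T hTpos (le_trans hfloorN (by exact_mod_cast hT))
    rw [← hST, one_div_mul_eq_div] at h1
    have h2 : (σ + ε + 2 * M / (T:ℝ)) * T ≤ S T := (le_div_iff₀ hTR).mp h1
    calc (σ + ε) * T + 2 * M = (σ + ε + 2 * M / (T:ℝ)) * T := by field_simp
      _ ≤ S T := h2
  -- the lower-bound sequence
  set C : ℝ := |σ| + M + ε with hC
  have hCpos : 0 < C := by positivity
  clear_value C
  set Lb : ℕ → ℝ := fun T =>
    (σ + ε) * T * α ^ T + 2 * M * α ^ T -
      (if T < N then (C * T + 2 * M) * α ^ T else 0) with hLb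
  clear_value Lb
  have hLle : ∀ T, Lb T ≤ α ^ T * S T := by
    intro T
    by_cases hTN : T < N
    · simp only [hLb, if_pos hTN]
      have hSlb : -(M * T) ≤ S T := (abs_le.mp (habsS T)).1
      have e1 : α ^ T * -(M * T) ≤ α ^ T * S T :=
        mul_le_mul_of_nonneg_left hSlb (by positivity)
      have e2 : (0:ℝ) ≤ (|σ| - σ) * ((T:ℝ) * α ^ T) := by
        have h8 : σ ≤ |σ| := le_abs_self σ
        have h3 : (0:ℝ) ≤ (T:ℝ) * α ^ T := by positivity
        nlinarith
      simp only [hC] at *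
      nlinarith
    · simp only [hLb, if_neg hTN]
      have h4 := hSlow T (le_of_not_gt hTN)
      have h5 : α ^ T * ((σ + ε) * T + 2 * M) ≤ α ^ T * S T :=
        mul_le_mul_of_nonneg_left h4 (by positivity)
      nlinarith
  have hsumIte : Summable (fun T : ℕ => if T < N then (C * T + 2 * M) * α ^ T else 0) := by
    apply summable_of_ne_finset_zero (s := Finset.range N)
    intro b hb
    rw [if_neg (by simpa using hb)]
  have hsum2 : Summable (fun T : ℕ => (σ + ε) * ((T:ℝ) * α ^ T) + 2 * M * α ^ T) :=
    (hngeo.mul_left _).add (hgeo.mul_left _)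
  have hLbsum : Summable Lb := by
    apply Summable.congr (hsum2.sub hsumIte)
    intro T
    simp only [hLb]
    ring
  have hLbtsum : ∑' T, Lb T =
      (σ + ε) * (α / (1-α)^2) + 2 * M * (1-α)⁻¹ -
        ∑ T ∈ Finset.range N, (C * T + 2 * M) * α ^ T := by
    have e1 : ∑' T, Lb T = ∑' T : ℕ, ((σ + ε) * ((T:ℝ) * α ^ T) + 2 * M * α ^ T) -
        ∑' T : ℕ, (if T < N then (C * T + 2 * M) * α ^ T else 0) := by
      rw [← Summable.tsum_sub hsum2 hsumIte]
      apply tsum_congr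
      intro T
      simp only [hLb]
      ring
    rw [e1, Summable.tsum_add (hngeo.mul_left _) (hgeo.mul_left _), tsum_mul_left,
      tsum_mul_left, htsum_n, htsum_geo,
      tsum_eq_sum (s := Finset.range N) (by intro b hb; rw [if_neg (by simpa using hb)])]
    congr 1
    apply Finset.sum_congr rfl
    intro T hT
    rw [if_pos (Finset.mem_range.mp hT)]
  have hmain : ∑' T, Lb T ≤ ∑' T, α ^ T * S T := Summable.tsum_le_tsum hLle hLbsum hsum_S
  rw [hP, hLbtsum] at hmain
  have key2 : ε * (α / (1-α)^2) + 2 * M * (1-α)⁻¹ ≤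
      ∑ T ∈ Finset.range N, (C * T + 2 * M) * α ^ T := by linarith
  have hA'pos : 0 < α / (1-α)^2 := by positivity
  by_cases hcase : ⌊T0⌋ ≤ 1
  · -- small floor: N = 1
    have hNeq : N = 1 := by
      have h6 : ⌊T0⌋.toNat ≤ 1 := by omega
      simp only [hNdef]
      omega
    rw [hNeq] at key2
    simp only [Finset.sum_range_one, Nat.cast_zero, mul_zero, zero_add, pow_zero, mul_one] at key2
    have h7 : 1 ≤ (1-α)⁻¹ := (one_le_inv₀ hα1').2 (by linarith)
    have h8 : 2*M*1 ≤ 2*M*(1-α)⁻¹ := mul_le_mul_of_nonneg_left h7 (by positivity)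
    have h9 : 0 < ε * (α/(1-α)^2) := mul_pos hε hA'pos
    linarith
  · -- large floor
    push_neg at hcase
    have hNZ : (N:ℤ) = ⌊T0⌋ := by
      have h2 : N = ⌊T0⌋.toNat := by simp only [hNdef]; omega
      rw [h2, Int.toNat_of_nonneg (by omega)]
    have hNT0 : (N:ℝ) ≤ T0 := by
      have h1 : ((N:ℤ):ℝ) ≤ T0 := by
        rw [hNZ]; exact Int.floor_le T0
      exact_mod_cast h1
    -- α^N ≥ 1 - ε/D, hence D(1 - α^N) ≤ ε
    have h3 : Real.exp (Real.log α * T0) ≤ α ^ N := by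
      rw [← Real.rpow_natCast α N, ← Real.rpow_def_of_pos hα0]
      exact Real.rpow_le_rpow_of_exponent_ge hα0 hα1.le hNT0
    have h4 : Real.log α * T0 = -(ε / D) := by
      have hLne : Real.log α ≠ 0 := ne_of_lt hL
      rw [hT0, mul_comm, div_mul_eq_div_div, div_neg, neg_mul, div_mul_cancel₀ _ hLne]
    have h5 : 1 - ε / D ≤ α ^ N := by
      have h5a := Real.add_one_le_exp (-(ε/D))
      rw [h4] at h3
      linarith
    have hpow : D * (1 - α ^ N) ≤ ε := by
      have h6 : D * (ε / D) = ε := by field_simp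
      have h7a : (1:ℝ) - α ^ N ≤ ε / D := by linarith
      have h7 : D * (1 - α ^ N) ≤ D * (ε / D) :=
        mul_le_mul_of_nonneg_left h7a hDpos.le
      linarith
    -- bound the finite sum
    have b1 : ∑ T ∈ Finset.range N, (α:ℝ) ^ T = (1 - α ^ N)/(1-α) := by
      rw [geom_sum_eq (ne_of_lt hα1),
        show (1:ℝ) - α ^ N = -(α ^ N - 1) by ring,
        show (1:ℝ) - α = -(α - 1) by ring, neg_div_neg_eq]
    have hsplit : (∑ i ∈ Finset.range N, (i:ℝ) * α ^ i) +
        ∑' i : ℕ, ((i + N : ℕ):ℝ) * α ^ (i + N) = α/(1-α)^2 := by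
      have hs := Summable.sum_add_tsum_nat_add (f := fun n : ℕ => (n:ℝ) * α ^ n) N hngeo
      rw [htsum_n] at hs
      exact hs
    have htail : α ^ N * (α/(1-α)^2) ≤ ∑' i : ℕ, ((i + N : ℕ) : ℝ) * α ^ (i + N) := by
      rw [← htsum_n, ← tsum_mul_left]
      apply Summable.tsum_le_tsum _ (hngeo.mul_left _) ((summable_nat_add_iff N).2 hngeo)
      intro i
      push_cast
      rw [pow_add]
      have hpp : (0:ℝ) ≤ α ^ i * α ^ N := by positivity
      have hle : ((i:ℝ)) * (α ^ i * α ^ N) ≤ ((i:ℝ) + N) * (α ^ i * α ^ N) :=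
        mul_le_mul_of_nonneg_right (le_add_of_nonneg_right (Nat.cast_nonneg N)) hpp
      nlinarith [hle]
    have b2 : ∑ T ∈ Finset.range N, (T:ℝ) * α ^ T ≤ (1 - α ^ N) * (α/(1-α)^2) := by
      have expand : (1 - α ^ N) * (α/(1-α)^2) = α/(1-α)^2 - α ^ N * (α/(1-α)^2) := by ring
      linarith [hsplit, htail]
    have bsplit : ∑ T ∈ Finset.range N, (C * T + 2*M) * α ^ T =
        C * (∑ T ∈ Finset.range N, (T:ℝ) * α ^ T) + 2*M*(∑ T ∈ Finset.range N, (α:ℝ) ^ T) := by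
      rw [Finset.mul_sum, Finset.mul_sum, ← Finset.sum_add_distrib]
      apply Finset.sum_congr rfl
      intro t _
      ring
    have b3 : ∑ T ∈ Finset.range N, (C * T + 2*M) * α ^ T ≤
        C * ((1 - α ^ N) * (α/(1-α)^2)) + 2*M*((1 - α ^ N)/(1-α)) := by
      rw [bsplit, b1]
      have := mul_le_mul_of_nonneg_left b2 hCpos.le
      linarith
    have key3 := key2.trans b3
    have h10 : 2*M*((1 - α ^ N)/(1-α)) ≤ 2*M*(1-α)⁻¹ := by
      apply mul_le_mul_of_nonneg_left _ (by positivity)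
      rw [div_le_iff₀ hα1', inv_mul_cancel₀ (ne_of_gt hα1')]
      linarith [pow_pos hα0 N]
    have h11 : ε * (α/(1-α)^2) ≤ C * (1 - α ^ N) * (α/(1-α)^2) := by
      have expand2 : C * ((1 - α ^ N) * (α/(1-α)^2)) = C * (1 - α ^ N) * (α/(1-α)^2) := by ring
      linarith
    have h12 : ε ≤ C * (1 - α ^ N) := le_of_mul_le_mul_right h11 hA'pos
    have m1 : D * ε ≤ D * (C * (1 - α ^ N)) := mul_le_mul_of_nonneg_left h12 hDpos.le
    have m2 : C * (D * (1 - α ^ N)) ≤ C * ε := mul_le_mul_of_nonneg_left hpow hCpos.le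
    have m3 : D * (C * (1 - α ^ N)) = C * (D * (1 - α ^ N)) := by ring
    have hDC : D ≤ C := le_of_mul_le_mul_right (by linarith) hε
    rw [hD, hC] at hDC
    have habsσ : 0 ≤ |σ| := abs_nonneg σ
    have hMz : M = 0 := le_antisymm (by linarith) hM
    have hσz : |σ| = 0 := le_antisymm (by linarith) habsσ
    rw [hC, hMz, hσz] at h12
    have expand3 : (0 + 0 + ε) * (1 - α ^ N) = ε - ε * α ^ N := by ring
    have hfin : 0 < ε * α ^ N := mul_pos hε (pow_pos hα0 N)
    linarith
end
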